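/- Let L ≥ 3, N a positive integer, σ_w, σ_b > 0 with 0 < σ_w² < 1, and set Δ_w = 1 − σ_w² and r* = √(N σ_b²/Δ_w). Define the ring energy ℒ: (0,∞)^L → ℝ by ℒ(r_0,…,r_{L-1}) = (1/2) Σ_{l=0}^{L-1} [ r_l²/(σ_w² r_{l-1}²/N + σ_b²) − N log( r_l²/(σ_w² r_l²/N + σ_b²) ) ], with the index l−1 taken modulo L. Then at the uniform point r = (r*, …, r*): (i) the gradient of ℒ vanishes, and (ii) for every ε ∈ ℝ^L the Hessian quadratic form satisfies (1/2) ε^T (Hess ℒ)(r) ε = (Δ_w/σ_b²) Σ_{l=0}^{L-1} [ (1 + σ_w⁴) ε_l² − 2 σ_w² ε_l ε_{l-1} ], with indices modulo L. -/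

import Mathlib

set_option maxHeartbeats 1000000 in
open ContinuousLinearMap in
/-- For the linear stochastic network on a ring of depth `L ≥ 3` and width `N`,
with `0 < σ_w² < 1`, `Δ_w = 1 − σ_w²`, `r* = √(N σ_b²/Δ_w)`: at the uniform configuration
`r = (r*, …, r*)` the gradient of the ring energy `ℒ` vanishes and the Hessian quadratic
form is `(1/2) ε ⬝ Hess ℒ ⬝ ε = (Δ_w/σ_b²) Σ_l [(1+σ_w⁴) ε_l² − 2σ_w² ε_l ε_{l−1}]`. -/
theorem linear_ring_saddle_point_expansion
    (L : ℕ) (hL : 3 ≤ L) (N : ℕ) (hN : 0 < N)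
    (σw σb : ℝ) (hσw : 0 < σw ^ 2) (hσw1 : σw ^ 2 < 1) (hσb : 0 < σb)
    (Δw : ℝ) (hΔw : Δw = 1 - σw ^ 2)
    (rs : ℝ) (hrs : rs = Real.sqrt (N * σb ^ 2 / Δw))
    (ℒ : (Fin L → ℝ) → ℝ)
    (hℒ : ∀ r : Fin L → ℝ, ℒ r = (1 / 2) * ∑ l : Fin L,
      (r l ^ 2 / (σw ^ 2 * r (l - ⟨1, by omega⟩) ^ 2 / N + σb ^ 2) -
        N * Real.log (r l ^ 2 / (σw ^ 2 * r l ^ 2 / N + σb ^ 2)))) :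
    fderiv ℝ ℒ (fun _ => rs) = 0 ∧
      ∀ ε : Fin L → ℝ,
        (1 / 2) * iteratedFDeriv ℝ 2 ℒ (fun _ => rs) (fun _ => ε) =
          (Δw / σb ^ 2) * ∑ l : Fin L,
            ((1 + σw ^ 4) * ε l ^ 2 - 2 * σw ^ 2 * ε l * ε (l - ⟨1, by omega⟩)) := by
  subst hΔw
  have h1L : 1 < L := by omega
  haveI : NeZero L := ⟨by omega⟩
  set e1 : Fin L := ⟨1, h1L⟩ with he1
  have hN' : (0:ℝ) < N := by exact_mod_cast hN
  have hNne : (N:ℝ) ≠ 0 := hN'.ne'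
  have hΔ : (0:ℝ) < 1 - σw ^ 2 := by linarith
  have hsw : (1:ℝ) - σw ^ 2 ≠ 0 := hΔ.ne'
  have hσb2 : (0:ℝ) < σb ^ 2 := by positivity
  have hrs2 : rs ^ 2 = N * σb ^ 2 / (1 - σw ^ 2) := by
    rw [hrs, Real.sq_sqrt]; positivity
  have hrs0 : 0 < rs := by rw [hrs]; apply Real.sqrt_pos.mpr; positivity
  have hN2 : (N:ℝ) = rs ^ 2 * (1 - σw ^ 2) / σb ^ 2 := by
    rw [hrs2]; field_simp
  set d : ℝ → ℝ := fun t => σw ^ 2 * t ^ 2 / N + σb ^ 2 with hd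
  have hdpos : ∀ t, 0 < d t := by intro t; rw [hd]; positivity
  have hd' : ∀ t, HasDerivAt d (2*σw^2*t/N) t := by
    intro t
    rw [hd]
    have h := (((hasDerivAt_pow 2 t).const_mul (σw^2)).div_const (N:ℝ)).add_const (σb^2)
    refine h.congr_deriv ?_
    push_cast; ring
  have hdrs : d rs = σb ^ 2 / (1 - σw ^ 2) := by
    rw [hd]; simp only
    rw [hrs2]
    field_simp
    ring
  have hinv : ∀ t : ℝ, HasDerivAt (fun t : ℝ => (d t)⁻¹) (-(2*σw^2*t/N) / (d t)^2) t :=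
    fun t => (hd' t).inv (hdpos t).ne'
  -- the open set of everywhere-positive configurations
  have hUopen : IsOpen {r : Fin L → ℝ | ∀ l, 0 < r l} := by
    have h : {r : Fin L → ℝ | ∀ l, 0 < r l}
        = ⋂ l, (fun r : Fin L → ℝ => r l) ⁻¹' Set.Ioi 0 := by
      ext r; simp [Set.mem_iInter]
    rw [h]
    exact isOpen_iInter_of_finite fun l => (continuous_apply l).isOpen_preimage _ isOpen_Ioi
  have hx0U : ∀ l : Fin L, (0:ℝ) < (fun _ : Fin L => rs) l := fun _ => hrs0
  -- the smooth model Φ and its derivative F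
  set Φ : (Fin L → ℝ) → ℝ := fun r => (1/2 : ℝ) * ∑ l : Fin L,
      ((r l)^2 * (d (r (l - e1)))⁻¹ - (N:ℝ) * (Real.log ((r l)^2) - Real.log (d (r l)))) with hΦ
  set F : (Fin L → ℝ) → ((Fin L → ℝ) →L[ℝ] ℝ) := fun r =>
      (1/2 : ℝ) • ∑ l : Fin L,
        ((2*(r l)*(d (r (l - e1)))⁻¹ - 2*(N:ℝ)*(r l)⁻¹ + 2*σw^2*((r l)*(d (r l))⁻¹))
            • (proj l : (Fin L → ℝ) →L[ℝ] ℝ)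
          + ((-(2*σw^2)/(N:ℝ)) * ((r l)^2 * ((r (l - e1)) * ((d (r (l - e1)))^2)⁻¹)))
            • (proj (l - e1) : (Fin L → ℝ) →L[ℝ] ℝ)) with hF
  have hproj : ∀ (x : Fin L → ℝ) (m : Fin L), HasFDerivAt (fun q : Fin L → ℝ => q m)
      (proj m : (Fin L → ℝ) →L[ℝ] ℝ) x :=
    fun x m => (proj m : (Fin L → ℝ) →L[ℝ] ℝ).hasFDerivAt
  have hkey : ∀ (r : Fin L → ℝ), (∀ l, 0 < r l) → ∀ l : Fin L,
      HasFDerivAt (fun r : Fin L → ℝ => (r l)^2 * (d (r (l - e1)))⁻¹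
          - (N:ℝ) * (Real.log ((r l)^2) - Real.log (d (r l))))
        ((2*(r l)*(d (r (l - e1)))⁻¹ - 2*(N:ℝ)*(r l)⁻¹ + 2*σw^2*((r l)*(d (r l))⁻¹))
            • (proj l : (Fin L → ℝ) →L[ℝ] ℝ)
          + ((-(2*σw^2)/(N:ℝ)) * ((r l)^2 * ((r (l - e1)) * ((d (r (l - e1)))^2)⁻¹)))
            • (proj (l - e1) : (Fin L → ℝ) →L[ℝ] ℝ)) r := by
    intro r hr l
    have hx := (hr l).ne'
    have hsq : HasFDerivAt (fun q : Fin L → ℝ => (q l)^2)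
        ((2*(r l)) • (proj l : (Fin L → ℝ) →L[ℝ] ℝ)) r := by
      have h := (hasDerivAt_pow 2 (r l)).comp_hasFDerivAt r (hproj r l)
      simp only [Function.comp_def] at h
      refine h.congr_fderiv ?_
      congr 1
      push_cast; ring
    have hinvy : HasFDerivAt (fun q : Fin L → ℝ => (d (q (l - e1)))⁻¹)
        ((-(2*σw^2*(r (l - e1))/N) / (d (r (l - e1)))^2)
          • (proj (l - e1) : (Fin L → ℝ) →L[ℝ] ℝ)) r := by
      have h := (hinv (r (l - e1))).comp_hasFDerivAt r (hproj r (l - e1))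
      simpa [Function.comp_def] using h
    have ht1 := hsq.mul hinvy
    have hlog1 : HasFDerivAt (fun q : Fin L → ℝ => Real.log ((q l)^2))
        (((2:ℕ)*(r l)^1/(r l)^2) • (proj l : (Fin L → ℝ) →L[ℝ] ℝ)) r := by
      have h := ((hasDerivAt_pow 2 (r l)).log (pow_ne_zero 2 hx)).comp_hasFDerivAt r (hproj r l)
      simpa [Function.comp_def] using h
    have hlog2 : HasFDerivAt (fun q : Fin L → ℝ => Real.log (d (q l)))
        ((2*σw^2*(r l)/N / d (r l)) • (proj l : (Fin L → ℝ) →L[ℝ] ℝ)) r := by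
      have h := ((hd' (r l)).log (hdpos (r l)).ne').comp_hasFDerivAt r (hproj r l)
      simpa [Function.comp_def] using h
    have ht2 := (hlog1.sub hlog2).const_mul (N:ℝ)
    have htot := ht1.sub ht2
    refine htot.congr_fderiv ?_
    ext v
    have h1 := (hdpos (r l)).ne'
    have h2 := (hdpos (r (l - e1))).ne'
    simp only [ContinuousLinearMap.add_apply, ContinuousLinearMap.smul_apply,
      ContinuousLinearMap.sub_apply, ContinuousLinearMap.proj_apply, smul_eq_mul]
    push_cast
    field_simp
    ring
  have hΦd : ∀ r, (∀ l, 0 < r l) → HasFDerivAt Φ (F r) r := by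
    intro r hr
    rw [hΦ, hF]
    exact (HasFDerivAt.fun_sum fun l _ => hkey r hr l).const_mul (1/2 : ℝ)
  -- ℒ agrees with Φ on the positive orthant
  have hEq : ∀ p : Fin L → ℝ, (∀ l, 0 < p l) → ℒ p = Φ p := by
    intro p hp
    rw [hℒ, hΦ]
    congr 1
    refine Finset.sum_congr rfl fun l _ => ?_
    rw [div_eq_mul_inv, Real.log_div (pow_ne_zero 2 (hp l).ne') (hdpos (p l)).ne']
  have hfderivF : ∀ p : Fin L → ℝ, (∀ l, 0 < p l) → fderiv ℝ ℒ p = F p := by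
    intro p hp
    have h1 : HasFDerivAt ℒ (F p) p := by
      refine (hΦd p hp).congr_of_eventuallyEq ?_
      filter_upwards [hUopen.mem_nhds hp] with q hq using hEq q hq
    exact h1.fderiv
  -- reindexing along the ring shift
  have hshift : ∀ v : Fin L → ℝ, ∑ l : Fin L, v (l - e1) = ∑ l : Fin L, v l := fun v =>
    Fintype.sum_equiv (Equiv.subRight e1) _ _ (fun l => rfl)
  constructor
  · -- gradient vanishes
    rw [hfderivF _ hx0U]
    have hAB : (2*rs*(d rs)⁻¹ - 2*(N:ℝ)*rs⁻¹ + 2*σw^2*(rs*(d rs)⁻¹))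
        + ((-(2*σw^2)/(N:ℝ)) * (rs^2 * (rs * ((d rs)^2)⁻¹))) = 0 := by
      rw [hdrs, hN2]
      field_simp
      ring
    ext v
    rw [hF]
    simp only [ContinuousLinearMap.smul_apply, ContinuousLinearMap.coe_sum',
      Finset.sum_apply, ContinuousLinearMap.add_apply, ContinuousLinearMap.smul_apply,
      ContinuousLinearMap.proj_apply, smul_eq_mul, ContinuousLinearMap.zero_apply]
    have hs1 : ∑ l : Fin L, ((-(2*σw^2)/(N:ℝ)) * (rs^2 * (rs * ((d rs)^2)⁻¹))) * v (l - e1)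
        = ∑ l : Fin L, ((-(2*σw^2)/(N:ℝ)) * (rs^2 * (rs * ((d rs)^2)⁻¹))) * v l :=
      Fintype.sum_equiv (Equiv.subRight e1) _ _ (fun l => rfl)
    rw [Finset.sum_add_distrib, hs1, ← Finset.sum_add_distrib]
    rw [Finset.sum_congr rfl fun l _ => by rw [← add_mul, hAB, zero_mul]]
    simp
  · -- Hessian quadratic form
    intro ε
    -- second derivative of F at the uniform point
    have hA2 : ∀ l : Fin L, HasFDerivAt (fun r : Fin L → ℝ =>
        2*(r l)*(d (r (l - e1)))⁻¹ - 2*(N:ℝ)*(r l)⁻¹ + 2*σw^2*((r l)*(d (r l))⁻¹))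
        (((4 + 2*σw^2 - 4*σw^4) * (1 - σw^2) / σb^2) • (proj l : (Fin L → ℝ) →L[ℝ] ℝ)
          + (-(4*σw^2) * (1 - σw^2) / σb^2) • (proj (l - e1) : (Fin L → ℝ) →L[ℝ] ℝ))
        (fun _ => rs) := by
      intro l
      have hinvy := (hinv rs).comp_hasFDerivAt (f := fun q : Fin L → ℝ => q (l - e1))
          (fun _ => rs) (hproj _ (l - e1))
      simp only [Function.comp_def] at hinvy
      have h1 := ((hproj (fun _ => rs) l).const_mul (2:ℝ)).mul hinvy
      have h2 := ((hasDerivAt_inv hrs0.ne').const_mul (2*(N:ℝ))).comp_hasFDerivAt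
          (f := fun q : Fin L → ℝ => q l) (fun _ => rs) (hproj _ l)
      simp only [Function.comp_def] at h2
      have h3 := (((hasDerivAt_id' (x := rs)).mul (hinv rs)).const_mul (2*σw^2)).comp_hasFDerivAt
          (f := fun q : Fin L → ℝ => q l) (fun _ => rs) (hproj _ l)
      simp only [Function.comp_def] at h3
      have htot := (h1.sub h2).add h3
      refine htot.congr_fderiv ?_
      ext v
      simp only [ContinuousLinearMap.add_apply, ContinuousLinearMap.smul_apply,
        ContinuousLinearMap.sub_apply, ContinuousLinearMap.proj_apply, smul_eq_mul]
      rw [hdrs, hN2]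
      field_simp
      ring
    have hB2 : ∀ l : Fin L, HasFDerivAt (fun r : Fin L → ℝ =>
        (-(2*σw^2)/(N:ℝ)) * ((r l)^2 * ((r (l - e1)) * ((d (r (l - e1)))^2)⁻¹)))
        ((-(4*σw^2) * (1 - σw^2) / σb^2) • (proj l : (Fin L → ℝ) →L[ℝ] ℝ)
          + ((-(2*σw^2) + 8*σw^4) * (1 - σw^2) / σb^2)
            • (proj (l - e1) : (Fin L → ℝ) →L[ℝ] ℝ)) (fun _ => rs) := by
      intro l
      have hsq := (hasDerivAt_pow 2 rs).comp_hasFDerivAt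
          (f := fun q : Fin L → ℝ => q l) (fun _ => rs) (hproj _ l)
      simp only [Function.comp_def] at hsq
      have hg := ((hasDerivAt_id' (x := rs)).mul
          (((hd' rs).pow 2).inv (pow_ne_zero 2 (hdpos rs).ne'))).comp_hasFDerivAt
          (f := fun q : Fin L → ℝ => q (l - e1)) (fun _ => rs) (hproj _ (l - e1))
      simp only [Function.comp_def] at hg
      have htot := (hsq.mul hg).const_mul (-(2*σw^2)/(N:ℝ))
      refine htot.congr_fderiv ?_
      ext v
      simp only [ContinuousLinearMap.add_apply, ContinuousLinearMap.smul_apply,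
        ContinuousLinearMap.sub_apply, ContinuousLinearMap.proj_apply, smul_eq_mul,
        Pi.mul_apply, Pi.inv_apply, Pi.pow_apply]
      rw [hdrs, hN2]
      push_cast
      field_simp
      ring
    have hFd : HasFDerivAt F ((1/2 : ℝ) • ∑ l : Fin L,
        (((((4 + 2*σw^2 - 4*σw^4) * (1 - σw^2) / σb^2) • (proj l : (Fin L → ℝ) →L[ℝ] ℝ)
            + (-(4*σw^2) * (1 - σw^2) / σb^2) • (proj (l - e1) : (Fin L → ℝ) →L[ℝ] ℝ)).smulRight
              (proj l : (Fin L → ℝ) →L[ℝ] ℝ))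
          + (((-(4*σw^2) * (1 - σw^2) / σb^2) • (proj l : (Fin L → ℝ) →L[ℝ] ℝ)
            + ((-(2*σw^2) + 8*σw^4) * (1 - σw^2) / σb^2)
              • (proj (l - e1) : (Fin L → ℝ) →L[ℝ] ℝ)).smulRight
              (proj (l - e1) : (Fin L → ℝ) →L[ℝ] ℝ)))) (fun _ => rs) := by
      rw [hF]
      exact (HasFDerivAt.fun_sum fun l _ =>
        ((hA2 l).smul_const _).fun_add ((hB2 l).smul_const _)).fun_const_smul (1/2 : ℝ)
    have hev : fderiv ℝ ℒ =ᶠ[nhds (fun _ : Fin L => rs)] F := by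
      filter_upwards [hUopen.mem_nhds hx0U] with q hq using hfderivF q hq
    rw [iteratedFDeriv_two_apply, hev.fderiv_eq, hFd.fderiv]
    simp only [ContinuousLinearMap.smul_apply, ContinuousLinearMap.coe_sum',
      Finset.sum_apply, ContinuousLinearMap.add_apply, ContinuousLinearMap.smulRight_apply,
      ContinuousLinearMap.smul_apply, ContinuousLinearMap.proj_apply, smul_eq_mul]
    set cA : ℝ := (4 + 2*σw^2 - 4*σw^4) * (1 - σw^2) / σb^2 with hcA
    set cB : ℝ := -(4*σw^2) * (1 - σw^2) / σb^2 with hcB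
    set cD : ℝ := (-(2*σw^2) + 8*σw^4) * (1 - σw^2) / σb^2 with hcD
    have hsplit : ∀ l : Fin L,
        (cA * ε l + cB * ε (l - e1)) * ε l + (cB * ε l + cD * ε (l - e1)) * ε (l - e1)
        = cD * (ε (l - e1))^2 + (cA * ε l^2 + (2*cB) * (ε l * ε (l - e1))) := by
      intro l; ring
    rw [Finset.sum_congr rfl fun l _ => hsplit l, Finset.sum_add_distrib]
    have hs1 : ∑ l : Fin L, cD * (ε (l - e1))^2 = ∑ l : Fin L, cD * (ε l)^2 :=
      Fintype.sum_equiv (Equiv.subRight e1) _ _ (fun l => rfl)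
    rw [hs1, ← Finset.sum_add_distrib, Finset.mul_sum, Finset.mul_sum, Finset.mul_sum]
    refine Finset.sum_congr rfl fun l _ => ?_
    rw [hcA, hcB, hcD]
    field_simp
    ring
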